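/- Nikolskii-type inequality (q<p): Let λ>1, a>0, b∈ℝ and 1≤q<p≤∞. There exists a constant C>0 such that for every m∈ℕ and every polynomial φ of degree at most m, ‖φ‖_{L_{q,w}(ℝ)} ≤ C·m^{(1/λ)(1/q−1/p)}·‖φ‖_{L_{p,w}(ℝ)}. -/

import Mathlib

open MeasureTheory Filter
open scoped ENNReal BigOperators NNReal

noncomputable section

/-- Univariate Freud weight `w(x) = exp(-a * |x|^λ + b)`. -/
def fw (lam a b : ℝ) (x : ℝ) : ℝ := Real.exp (-a * |x| ^ lam + b)

/-- Tensor-product Freud weight on `ι → ℝ`. -/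
def fwP (lam a b : ℝ) {ι : Type*} [Fintype ι] (x : ι → ℝ) : ℝ := ∏ i, fw lam a b (x i)

/-- Weighted `L_p` norm (extended-real valued): `‖f·w‖_p` with respect to `μ`. -/
def wnorm {α : Type*} [MeasurableSpace α] (μ : Measure α) (p : ℝ≥0∞) (w f : α → ℝ) : ℝ≥0∞ :=
  eLpNorm (fun x => f x * w x) p μ

/-- `r_λ = (1 - 1/λ) r`. -/
def rlam (lam : ℝ) (r : ℕ) : ℝ := (1 - 1 / lam) * r

/-- `δ_{λ,p,q}`.  (Recall that for `p = ∞` one has `p.toReal = 0` and `1/0 = 0` in Lean,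
which agrees with the convention `1/∞ = 0`.) -/
def dlt (lam : ℝ) (p q : ℝ≥0∞) : ℝ :=
  if p ≤ q then (1 - 1 / lam) * (1 / p.toReal - 1 / q.toReal)
  else (1 / lam) * (1 / q.toReal - 1 / p.toReal)

/-- `r_{λ,p,q} = r_λ - δ_{λ,p,q}`. -/
def rlampq (lam : ℝ) (r : ℕ) (p q : ℝ≥0∞) : ℝ := rlam lam r - dlt lam p q

/-- `g` is the `k`-th weak derivative of `f` on `ℝ`. -/
def HasWeakDeriv (k : ℕ) (f g : ℝ → ℝ) : Prop :=
  ∀ φ : ℝ → ℝ, (∀ n : ℕ, ContDiff ℝ n φ) → HasCompactSupport φ →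
    ∫ x, f x * iteratedDeriv k φ x = (-1 : ℝ) ^ k * ∫ x, g x * φ x

/-- `D` is a family of weak derivatives of `f = D 0` up to order `r`, all lying
    in the weighted `L_p` space: a representative of `f ∈ W^r_{p,w}(ℝ)`. -/
def IsSobRep1 (lam a b : ℝ) (p : ℝ≥0∞) (r : ℕ) (f : ℝ → ℝ) (D : ℕ → ℝ → ℝ) : Prop :=
  D 0 = f ∧ ∀ k : ℕ, k ≤ r →
    HasWeakDeriv k f (D k) ∧ wnorm volume p (fw lam a b) (D k) < ⊤

/-- The norm of `W^r_{p,w}(ℝ)` computed from a representative family of weak derivatives. -/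
def sobNorm1 (lam a b : ℝ) (p : ℝ≥0∞) (r : ℕ) (D : ℕ → ℝ → ℝ) : ℝ≥0∞ :=
  if p = ∞ then ⨆ k : Fin (r + 1), wnorm volume ∞ (fw lam a b) (D k)
  else (∑ k ∈ Finset.range (r + 1),
      wnorm volume p (fw lam a b) (D k) ^ p.toReal) ^ (1 / p.toReal)

/-- The unit ball of `W^r_{p,w}(ℝ)`. -/
def sobBall1 (lam a b : ℝ) (p : ℝ≥0∞) (r : ℕ) : Set (ℝ → ℝ) :=
  {f | ∃ D, IsSobRep1 lam a b p r f D ∧ sobNorm1 lam a b p r D ≤ 1}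

/-- `P` is the sequence of orthonormal polynomials w.r.t. the weight `w² = exp(-2a|x|^λ+2b)`:
`P k` has degree `k`, positive leading coefficient, and `∫ P j P k w² = δ_{jk}`. -/
def IsONPoly (lam a b : ℝ) (P : ℕ → Polynomial ℝ) : Prop :=
  (∀ k : ℕ, (P k).degree = (k : WithBot ℕ)) ∧ (∀ k : ℕ, 0 < (P k).leadingCoeff) ∧
    ∀ j k : ℕ, (∫ x : ℝ, (P j).eval x * (P k).eval x * fw lam a b x ^ 2) =
      if j = k then (1 : ℝ) else 0

/-- Fourier coefficient `f̂(k) = ∫ f p_k w²`. -/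
def fc (lam a b : ℝ) (P : ℕ → Polynomial ℝ) (f : ℝ → ℝ) (k : ℕ) : ℝ :=
  ∫ x : ℝ, f x * (P k).eval x * fw lam a b x ^ 2

/-- Fourier partial sum `S_m f = ∑_{k<m} f̂(k) p_k`. -/
def Sop (lam a b : ℝ) (P : ℕ → Polynomial ℝ) (m : ℕ) (f : ℝ → ℝ) : ℝ → ℝ :=
  fun x => ∑ k ∈ Finset.range m, fc lam a b P f k * (P k).eval x

/-- de la Vallée Poussin sum `V_m f = (1/m) ∑_{k=m+1}^{2m} S_k f`. -/
def Vop (lam a b : ℝ) (P : ℕ → Polynomial ℝ) (m : ℕ) (f : ℝ → ℝ) : ℝ → ℝ :=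
  fun x => (1 / (m : ℝ)) * ∑ j ∈ Finset.Icc (m + 1) (2 * m), Sop lam a b P j f x

/-- `v_{m,0} = V_m`, `v_{m,k} = V_{m 2^k} - V_{m 2^{k-1}}` for `k ≥ 1`. -/
def vop (lam a b : ℝ) (P : ℕ → Polynomial ℝ) (m k : ℕ) (f : ℝ → ℝ) : ℝ → ℝ :=
  if k = 0 then Vop lam a b P m f
  else fun x => Vop lam a b P (m * 2 ^ k) f x - Vop lam a b P (m * 2 ^ (k - 1)) f x

/-- `s_{m,0} = S_m`, `s_{m,k} = S_{m 2^k} - S_{m 2^{k-1}}` for `k ≥ 1`. -/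
def sop (lam a b : ℝ) (P : ℕ → Polynomial ℝ) (m k : ℕ) (f : ℝ → ℝ) : ℝ → ℝ :=
  if k = 0 then Sop lam a b P m f
  else fun x => Sop lam a b P (m * 2 ^ k) f x - Sop lam a b P (m * 2 ^ (k - 1)) f x

/-! ### Multivariate notions -/

/-- Partial derivative in the `i`-th variable. -/
def pd {ι : Type*} [Fintype ι] [DecidableEq ι] (i : ι) (f : (ι → ℝ) → ℝ) : (ι → ℝ) → ℝ :=
  fun x => deriv (fun t => f (Function.update x i t)) (x i)

/-- Iterated mixed partial derivative `D^k`, `k` a multi-index. -/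
def pdMulti {ι : Type*} [Fintype ι] [DecidableEq ι] (k : ι → ℕ) (f : (ι → ℝ) → ℝ) :
    (ι → ℝ) → ℝ :=
  (Finset.univ.toList.map fun i : ι => (pd i)^[k i]).foldl (fun g F => F g) f

/-- `g` is the weak mixed partial derivative `D^k f` of `f` on `ι → ℝ`. -/
def HasWeakPDeriv {ι : Type*} [Fintype ι] [DecidableEq ι] (k : ι → ℕ)
    (f g : (ι → ℝ) → ℝ) : Prop :=
  ∀ φ : (ι → ℝ) → ℝ, (∀ n : ℕ, ContDiff ℝ n φ) → HasCompactSupport φ →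
    ∫ x, f x * pdMulti k φ x = (-1 : ℝ) ^ (∑ i, k i) * ∫ x, g x * φ x

/-- `D` is a family of weak partial derivatives of `f = D 0` for all multi-indices
`k` with `|k|_∞ ≤ r`, all lying in weighted `L_p`: a representative of
`f ∈ W^r_{p,w}(ℝ^d)` (mixed smoothness `r`). -/
def IsSobRep (lam a b : ℝ) {d : ℕ} (p : ℝ≥0∞) (r : ℕ)
    (f : (Fin d → ℝ) → ℝ) (D : (Fin d → ℕ) → (Fin d → ℝ) → ℝ) : Prop :=
  D 0 = f ∧ ∀ k : Fin d → ℕ, (∀ i, k i ≤ r) →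
    HasWeakPDeriv k f (D k) ∧ wnorm volume p (fwP lam a b) (D k) < ⊤

/-- The norm of `W^r_{p,w}(ℝ^d)` computed from a representative family. -/
def sobNorm (lam a b : ℝ) {d : ℕ} (p : ℝ≥0∞) (r : ℕ)
    (D : (Fin d → ℕ) → (Fin d → ℝ) → ℝ) : ℝ≥0∞ :=
  if p = ∞ then ⨆ k : Fin d → Fin (r + 1),
      wnorm volume ∞ (fwP lam a b) (D fun i => (k i : ℕ))
  else (∑ k : Fin d → Fin (r + 1),
      wnorm volume p (fwP lam a b) (D fun i => (k i : ℕ)) ^ p.toReal) ^ (1 / p.toReal)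

/-- The unit ball of `W^r_{p,w}(ℝ^d)`. -/
def sobBall (lam a b : ℝ) (d : ℕ) (p : ℝ≥0∞) (r : ℕ) : Set ((Fin d → ℝ) → ℝ) :=
  {f | ∃ D, IsSobRep lam a b p r f D ∧ sobNorm lam a b p r D ≤ 1}

/-- Apply a univariate operator `T` in the `i`-th variable. -/
def applyVar {ι : Type*} [Fintype ι] [DecidableEq ι] (i : ι)
    (T : (ℝ → ℝ) → ℝ → ℝ) (f : (ι → ℝ) → ℝ) : (ι → ℝ) → ℝ :=
  fun x => T (fun t => f (Function.update x i t)) (x i)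

/-- Tensor product of univariate operators, applied successively coordinate-wise. -/
def tensorOp {ι : Type*} [Fintype ι] [DecidableEq ι]
    (T : ι → (ℝ → ℝ) → ℝ → ℝ) (f : (ι → ℝ) → ℝ) : (ι → ℝ) → ℝ :=
  (Finset.univ.toList.map fun i : ι => applyVar i (T i)).foldl (fun g F => F g) f

/-- Univariate `E_k f = f - V_{2^k} f`. -/
def Eop (lam a b : ℝ) (P : ℕ → Polynomial ℝ) (k : ℕ) (f : ℝ → ℝ) : ℝ → ℝ :=
  fun x => f x - Vop lam a b P (2 ^ k) f x

/-- Multivariate `E_𝐤 = ⊗ E_{k_i}`. -/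
def EopD (lam a b : ℝ) (P : ℕ → Polynomial ℝ) {d : ℕ} (k : Fin d → ℕ) :
    ((Fin d → ℝ) → ℝ) → (Fin d → ℝ) → ℝ :=
  tensorOp fun i => Eop lam a b P (k i)

/-- Multivariate `v_𝐤 = ⊗ v_{k_i}` (with `v_0 = V_1`, `v_k = V_{2^k} - V_{2^{k-1}}`). -/
def vopD (lam a b : ℝ) (P : ℕ → Polynomial ℝ) {d : ℕ} (k : Fin d → ℕ) :
    ((Fin d → ℝ) → ℝ) → (Fin d → ℝ) → ℝ :=
  tensorOp fun i => vop lam a b P 1 (k i)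

/-- Multivariate `s_𝐤 = ⊗ s_{k_i}` (with `s_0 = S_1`, `s_k = S_{2^k} - S_{2^{k-1}}`). -/
def sopD (lam a b : ℝ) (P : ℕ → Polynomial ℝ) {d : ℕ} (k : Fin d → ℕ) :
    ((Fin d → ℝ) → ℝ) → (Fin d → ℝ) → ℝ :=
  tensorOp fun i => sop lam a b P 1 (k i)

/-- The de la Vallée Poussin hyperbolic cross operator `𝒱_ξ f = ∑_{|𝐤|₁ ≤ ξ} v_𝐤 f`. -/
def VV (lam a b : ℝ) (P : ℕ → Polynomial ℝ) (d : ℕ) (ξ : ℝ)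
    (f : (Fin d → ℝ) → ℝ) : (Fin d → ℝ) → ℝ :=
  fun x => ∑ k : Fin d → Fin (⌊ξ⌋₊ + 1),
    if ((∑ i, (k i : ℕ) : ℕ) : ℝ) ≤ ξ then vopD lam a b P (fun i => (k i : ℕ)) f x else 0

/-- The Fourier hyperbolic cross operator `𝒮_ξ f = ∑_{|𝐤|₁ ≤ ξ} s_𝐤 f`. -/
def SS (lam a b : ℝ) (P : ℕ → Polynomial ℝ) (d : ℕ) (ξ : ℝ)
    (f : (Fin d → ℝ) → ℝ) : (Fin d → ℝ) → ℝ :=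
  fun x => ∑ k : Fin d → Fin (⌊ξ⌋₊ + 1),
    if ((∑ i, (k i : ℕ) : ℕ) : ℝ) ≤ ξ then sopD lam a b P (fun i => (k i : ℕ)) f x else 0

/-- Kolmogorov `n`-width of `F` measured in the weighted `L_q` norm. -/
def kolW {α : Type*} [MeasurableSpace α] (μ : Measure α) (q : ℝ≥0∞) (w : α → ℝ)
    (n : ℕ) (F : Set (α → ℝ)) : ℝ≥0∞ :=
  ⨅ (L : Submodule ℝ (α → ℝ)) (_ : Module.rank ℝ ↥L ≤ (n : Cardinal)),
    ⨆ f ∈ F, ⨅ g ∈ L, wnorm μ q w (fun x => f x - g x)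

/-- Linear `n`-width of `F` measured in the weighted `L_q` norm. -/
def linW {α : Type*} [MeasurableSpace α] (μ : Measure α) (q : ℝ≥0∞) (w : α → ℝ)
    (n : ℕ) (F : Set (α → ℝ)) : ℝ≥0∞ :=
  ⨅ (A : (α → ℝ) →ₗ[ℝ] (α → ℝ)) (_ : Module.rank ℝ ↥(LinearMap.range A) ≤ (n : Cardinal)),
    ⨆ f ∈ F, wnorm μ q w (fun x => f x - A f x)

/-- The rank of a (not necessarily linear) operator: the dimension of (the span of) its range. -/
def rankOf {β γ : Type*} [AddCommMonoid γ] [Module ℝ γ] (T : β → γ) : Cardinal :=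
  Module.rank ℝ ↥(Submodule.span ℝ (Set.range T))

/-- `φ` is a polynomial of degree at most `m i` in the `i`-th variable. -/
def IsPolyDegLe {ι : Type*} [Fintype ι] [DecidableEq ι] (m : ι → ℕ) (φ : (ι → ℝ) → ℝ) : Prop :=
  ∃ c : (∀ i, Fin (m i + 1)) → ℝ,
    φ = fun x => ∑ s : ∀ i, Fin (m i + 1), c s * ∏ i, x i ^ (s i : ℕ)

/-- The multivariate orthonormal polynomial `p_𝐤(x) = ∏ p_{k_i}(x_i)`. -/
def pkD (P : ℕ → Polynomial ℝ) {d : ℕ} (k : Fin d → ℕ) (x : Fin d → ℝ) : ℝ :=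
  ∏ i, (P (k i)).eval (x i)

/-- Multivariate Fourier coefficient `f̂(𝐤) = ∫ f p_𝐤 w²`. -/
def fcD (lam a b : ℝ) (P : ℕ → Polynomial ℝ) {d : ℕ} (f : (Fin d → ℝ) → ℝ)
    (k : Fin d → ℕ) : ℝ :=
  ∫ x : Fin d → ℝ, f x * pkD P k x * fwP lam a b x ^ 2

/-- `ρ_{λ,r,𝐤} = ∏ (k_i + 1)^{r_λ}`. -/
def rho (lam : ℝ) (r : ℕ) {d : ℕ} (k : Fin d → ℕ) : ℝ :=
  ∏ i, ((k i : ℝ) + 1) ^ rlam lam r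

/-- The norm of the space `H^{r_λ}_w(ℝ^d)`. -/
def Hnorm (lam a b : ℝ) (P : ℕ → Polynomial ℝ) (d : ℕ) (r : ℕ)
    (f : (Fin d → ℝ) → ℝ) : ℝ≥0∞ :=
  (∑' k : Fin d → ℕ, ENNReal.ofReal ((rho lam r k * fcD lam a b P f k) ^ 2)) ^ (1 / 2 : ℝ)

/-- The unit ball of `H^{r_λ}_w(ℝ^d)` (inside `L_{2,w}(ℝ^d)`). -/
def Hball (lam a b : ℝ) (P : ℕ → Polynomial ℝ) (d : ℕ) (r : ℕ) :
    Set ((Fin d → ℝ) → ℝ) :=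
  {f | wnorm volume 2 (fwP lam a b) f < ⊤ ∧ Hnorm lam a b P d r f ≤ 1}

/-- Truncation `S*_ξ f = ∑_{ρ_{λ,r,𝐤} ≤ ξ} f̂(𝐤) p_𝐤` of the orthonormal polynomial expansion
on the hyperbolic cross `G(ξ)`. -/
def Sstar (lam a b : ℝ) (P : ℕ → Polynomial ℝ) (d : ℕ) (r : ℕ) (ξ : ℝ)
    (f : (Fin d → ℝ) → ℝ) : (Fin d → ℝ) → ℝ :=
  fun x => ∑' k : Fin d → ℕ,
    if rho lam r k ≤ ξ then fcD lam a b P f k * pkD P k x else 0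


section NikAux
open Polynomial Finset Set Real

/-- `n^n ≤ e^n n!` -/
lemma nik_pow_le_exp_mul_factorial : ∀ n : ℕ, (n : ℝ) ^ n ≤ Real.exp 1 ^ n * n.factorial := by
  intro n
  induction n with
  | zero => simp
  | succ n ih =>
    have hstep : ((n:ℝ) + 1) ^ n ≤ Real.exp 1 * (n:ℝ) ^ n := by
      rcases Nat.eq_zero_or_pos n with h0 | hpos
      · subst h0
        have h := Real.add_one_le_exp (1:ℝ)
        simp only [Nat.cast_zero, zero_add, pow_zero, one_pow, mul_one]
        linarith
      · have hn : (0:ℝ) < n := by exact_mod_cast hpos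
        have h1 : ((n:ℝ) + 1) = n * (1 + 1/n) := by field_simp
        have h2 : (1 + 1/(n:ℝ)) ^ n ≤ Real.exp 1 := by
          have h3 : (1 + 1/(n:ℝ)) ≤ Real.exp (1/n) := by
            have := Real.add_one_le_exp (1/(n:ℝ)); linarith
          calc (1 + 1/(n:ℝ)) ^ n ≤ Real.exp (1/n) ^ n := by
                apply pow_le_pow_left₀ (by positivity) h3
            _ = Real.exp ((n : ℝ) * (1/n)) := by rw [Real.exp_nat_mul]
            _ = Real.exp 1 := by rw [mul_one_div_cancel hn.ne']
        calc ((n:ℝ) + 1) ^ n = (n:ℝ) ^ n * (1 + 1/n) ^ n := by rw [h1, mul_pow]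
          _ ≤ (n:ℝ) ^ n * Real.exp 1 := by
              apply mul_le_mul_of_nonneg_left h2 (by positivity)
          _ = Real.exp 1 * (n:ℝ) ^ n := by ring
    have hf : (0:ℝ) ≤ (n.factorial : ℝ) := by positivity
    calc ((n+1 : ℕ) : ℝ) ^ (n+1) = ((n:ℝ)+1) * ((n:ℝ)+1) ^ n := by push_cast; ring
      _ ≤ ((n:ℝ)+1) * (Real.exp 1 * (n:ℝ)^n) := by
          apply mul_le_mul_of_nonneg_left hstep (by positivity)
      _ ≤ ((n:ℝ)+1) * (Real.exp 1 * (Real.exp 1 ^ n * n.factorial)) := by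
          apply mul_le_mul_of_nonneg_left (mul_le_mul_of_nonneg_left ih (Real.exp_pos 1).le)
            (by positivity)
      _ = Real.exp 1 ^ (n+1) * (((n:ℝ)+1) * n.factorial) := by ring
      _ = Real.exp 1 ^ (n+1) * ((n+1).factorial : ℝ) := by
          rw [Nat.factorial_succ]; push_cast; ring

/-- `m! ≤ 2^m i! (m-i)!` -/
lemma nik_factorial_le (m i : ℕ) (hi : i ≤ m) :
    m.factorial ≤ 2 ^ m * (i.factorial * (m - i).factorial) := by
  have h1 := Nat.choose_mul_factorial_mul_factorial hi
  have h2 : m.choose i ≤ 2 ^ m := by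
    rw [← Nat.sum_range_choose m]
    exact Finset.single_le_sum (fun j _ => Nat.zero_le _) (by simp [Nat.lt_succ_of_le hi])
  calc m.factorial = m.choose i * i.factorial * (m - i).factorial := h1.symm
    _ ≤ 2 ^ m * i.factorial * (m - i).factorial :=
        Nat.mul_le_mul_right _ (Nat.mul_le_mul_right _ h2)
    _ = 2 ^ m * (i.factorial * (m - i).factorial) := by ring

/-- node distance product -/
lemma nik_prod_nodes (m i : ℕ) (hi : i ≤ m) :
    (m.factorial : ℝ) / 2 ^ m ≤ ∏ j ∈ (Finset.range (m+1)).erase i, |(i:ℝ) - (j:ℝ)| := by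
  have hsplit : (Finset.range (m+1)).erase i = Finset.range i ∪ Finset.Ico (i+1) (m+1) := by
    ext j; simp only [Finset.mem_erase, Finset.mem_range, Finset.mem_union, Finset.mem_Ico]
    omega
  have hdisj : Disjoint (Finset.range i) (Finset.Ico (i+1) (m+1)) := by
    rw [Finset.disjoint_left]; intro j hj hj'
    simp only [Finset.mem_range] at hj
    simp only [Finset.mem_Ico] at hj'
    omega
  have h1 : ∏ j ∈ Finset.range i, |(i:ℝ) - (j:ℝ)| = (i.factorial : ℝ) := by
    have : ∀ j ∈ Finset.range i, |(i:ℝ) - (j:ℝ)| = ((i - j : ℕ) : ℝ) := by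
      intro j hj
      simp only [Finset.mem_range] at hj
      rw [Nat.cast_sub hj.le, abs_of_nonneg]
      have : (j:ℝ) ≤ i := by exact_mod_cast hj.le
      linarith
    rw [Finset.prod_congr rfl this, ← Nat.cast_prod]
    norm_cast
    rw [← Finset.prod_range_reflect (fun j => i - j) i]
    rw [← Finset.prod_range_add_one_eq_factorial i]
    apply Finset.prod_congr rfl
    intro j hj; simp only [Finset.mem_range] at hj; omega
  have h2 : ∏ j ∈ Finset.Ico (i+1) (m+1), |(i:ℝ) - (j:ℝ)| = ((m - i).factorial : ℝ) := by
    have : ∀ j ∈ Finset.Ico (i+1) (m+1), |(i:ℝ) - (j:ℝ)| = ((j - i : ℕ) : ℝ) := by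
      intro j hj
      simp only [Finset.mem_Ico] at hj
      rw [abs_sub_comm, Nat.cast_sub (by omega), abs_of_nonneg]
      have : (i:ℝ) ≤ j := by exact_mod_cast (by omega : i ≤ j)
      linarith
    rw [Finset.prod_congr rfl this, ← Nat.cast_prod]
    norm_cast
    rw [Finset.prod_Ico_eq_prod_range]
    have hmi : m + 1 - (i + 1) = m - i := by omega
    rw [hmi, ← Finset.prod_range_add_one_eq_factorial (m - i)]
    exact Finset.prod_congr rfl (fun j hj => by omega)
  rw [hsplit, Finset.prod_union hdisj, h1, h2]
  rw [div_le_iff₀ (by positivity)]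
  have := nik_factorial_le m i hi
  have hcast : (m.factorial : ℝ) ≤ 2 ^ m * (i.factorial * (m - i).factorial) := by
    exact_mod_cast this
  linarith [hcast]

/-- lower bound on the node denominator product -/
lemma nik_denom (m i : ℕ) (hm : 1 ≤ m) (hi : i ≤ m) :
    ((2 * Real.exp 1)⁻¹) ^ m ≤
      ∏ j ∈ (Finset.range (m+1)).erase i, |(i:ℝ)/m - (j:ℝ)/m| := by
  have hm0 : (0:ℝ) < m := by exact_mod_cast hm
  have hcard : ((Finset.range (m+1)).erase i).card = m := by
    rw [Finset.card_erase_of_mem (by simp [Nat.lt_succ_of_le hi])]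
    simp
  have h1 : ∏ j ∈ (Finset.range (m+1)).erase i, |(i:ℝ)/m - (j:ℝ)/m|
      = (∏ j ∈ (Finset.range (m+1)).erase i, |(i:ℝ) - (j:ℝ)|) / m ^ m := by
    have heach : ∀ j ∈ (Finset.range (m+1)).erase i,
        |(i:ℝ)/m - (j:ℝ)/m| = |(i:ℝ) - (j:ℝ)| / m := by
      intro j _
      rw [div_sub_div_same, abs_div, abs_of_pos hm0]
    rw [Finset.prod_congr rfl heach, Finset.prod_div_distrib, Finset.prod_const, hcard]
  rw [h1, le_div_iff₀ (by positivity)]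
  have hfac : (m:ℝ)^m / Real.exp 1 ^ m ≤ (m.factorial : ℝ) := by
    rw [div_le_iff₀ (by positivity)]
    have := nik_pow_le_exp_mul_factorial m
    nlinarith
  calc ((2 * Real.exp 1)⁻¹) ^ m * (m:ℝ) ^ m
      = ((m:ℝ)^m / Real.exp 1 ^ m) / 2 ^ m := by
        rw [inv_pow, mul_pow]
        field_simp
    _ ≤ (m.factorial : ℝ) / 2 ^ m := by gcongr
    _ ≤ _ := nik_prod_nodes m i hi

/-- eval bound for products of linear factors -/
lemma nik_prod_eval_bound {ι : Type*} (t : Finset ι) (r : ι → ℝ) (x : ℝ) (K : ℝ)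
    (h : ∀ j ∈ t, |x - r j| ≤ K) :
    |Polynomial.eval x (∏ j ∈ t, (Polynomial.X - Polynomial.C (r j)))| ≤ K ^ t.card := by
  rw [Polynomial.eval_prod, Finset.abs_prod]
  calc ∏ j ∈ t, |Polynomial.eval x (Polynomial.X - Polynomial.C (r j))|
      ≤ ∏ j ∈ t, K := by
        apply Finset.prod_le_prod (fun j _ => abs_nonneg _)
        intro j hj
        simpa using h j hj
    _ = K ^ t.card := Finset.prod_const K

/-- derivative eval bound for products of linear factors -/
lemma nik_deriv_prod_eval_bound {ι : Type*} [DecidableEq ι] (t : Finset ι) (r : ι → ℝ)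
    (x : ℝ) (K : ℝ) (hK : 1 ≤ K) (h : ∀ j ∈ t, |x - r j| ≤ K) :
    |Polynomial.eval x (Polynomial.derivative (∏ j ∈ t, (Polynomial.X - Polynomial.C (r j))))|
      ≤ t.card * K ^ t.card := by
  induction t using Finset.induction_on with
  | empty => simp
  | insert i t hnot ih =>
    rw [Finset.prod_insert hnot, derivative_mul]
    have h1 : Polynomial.derivative (Polynomial.X - Polynomial.C (r i)) = 1 := by
      simp
    rw [h1, one_mul]
    have hKp : (0:ℝ) < K := lt_of_lt_of_le one_pos hK
    have hbx : |x - r i| ≤ K := h i (Finset.mem_insert_self i t)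
    have hprod := nik_prod_eval_bound t r x K (fun j hj => h j (Finset.mem_insert_of_mem hj))
    have hder := ih (fun j hj => h j (Finset.mem_insert_of_mem hj))
    rw [Finset.card_insert_of_notMem hnot]
    calc |Polynomial.eval x ((∏ j ∈ t, (Polynomial.X - Polynomial.C (r j))) +
            (Polynomial.X - Polynomial.C (r i)) *
              Polynomial.derivative (∏ j ∈ t, (Polynomial.X - Polynomial.C (r j))))|
        ≤ |Polynomial.eval x (∏ j ∈ t, (Polynomial.X - Polynomial.C (r j)))| +
            |x - r i| * |Polynomial.eval x
              (Polynomial.derivative (∏ j ∈ t, (Polynomial.X - Polynomial.C (r j))))| := by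
          rw [Polynomial.eval_add, Polynomial.eval_mul]
          refine (abs_add_le _ _).trans ?_
          rw [abs_mul]
          simp
      _ ≤ K ^ t.card + K * (t.card * K ^ t.card) := by
          have := mul_le_mul hbx hder (abs_nonneg _) hKp.le
          nlinarith [pow_nonneg hKp.le t.card, abs_nonneg (Polynomial.eval x
            (Polynomial.derivative (∏ j ∈ t, (Polynomial.X - Polynomial.C (r j)))))]
      _ ≤ (t.card + 1) * K ^ (t.card + 1) := by
          have hpw : (0:ℝ) < K ^ t.card := pow_pos hKp _
          have h2 : K ^ t.card ≤ K ^ (t.card + 1) := by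
            apply pow_le_pow_right₀ hK
            omega
          rw [pow_succ]
          push_cast
          nlinarith
      _ ≤ ((t.card + 1 : ℕ) : ℝ) * K ^ (t.card + 1) := le_of_eq (by push_cast; ring)
    

/-- decomposition of the Lagrange basis polynomial -/
lemma nik_basis_decomp {ι : Type*} [DecidableEq ι] (s : Finset ι) (v : ι → ℝ) (i : ι) :
    Lagrange.basis s v i =
      Polynomial.C (∏ j ∈ s.erase i, (v i - v j)⁻¹) *
        ∏ j ∈ s.erase i, (Polynomial.X - Polynomial.C (v j)) := by
  rw [Lagrange.basis]
  unfold Lagrange.basisDivisor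
  rw [Finset.prod_mul_distrib, ← map_prod]

/-- Core lemma: growth and Markov-type bounds on `[0,1]`-normalized polynomials. -/
lemma nik_core (m : ℕ) (hm : 1 ≤ m) (p : Polynomial ℝ) (hdeg : p.natDegree ≤ m) (M : ℝ)
    (hM : ∀ i : ℕ, i ≤ m → |p.eval ((i : ℝ) / m)| ≤ M) :
    (∀ x : ℝ, |p.eval x| ≤ (m+1) * (2*Real.exp 1)^m * (1+|x|)^m * M) ∧
    (∀ x : ℝ, |x| ≤ 1 →
      |(Polynomial.derivative p).eval x| ≤ (m+1) * m * (4*Real.exp 1)^m * M) := by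
  have hm0 : (0:ℝ) < m := by exact_mod_cast hm
  set s : Finset ℕ := Finset.range (m+1) with hs
  set v : ℕ → ℝ := fun i => (i:ℝ)/m with hv
  have hinj : Set.InjOn v s := by
    intro i _ j _ hij
    simp only [hv] at hij
    field_simp at hij
    exact_mod_cast hij
  have hdeg' : p.degree < s.card := by
    rw [hs, Finset.card_range]
    calc p.degree ≤ (p.natDegree : WithBot ℕ) := Polynomial.degree_le_natDegree
      _ < ((m+1 : ℕ) : WithBot ℕ) := by
          exact_mod_cast Nat.lt_succ_of_le hdeg
  have hrep := Lagrange.eq_interpolate hinj hdeg'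
  have hM0 : 0 ≤ M := le_trans (abs_nonneg _) (hM 0 (Nat.zero_le m))
  have hcard : ∀ i ∈ s, (s.erase i).card = m := by
    intro i hi
    rw [Finset.card_erase_of_mem hi, hs, Finset.card_range]
    simp
  have hcinv : ∀ i ∈ s, |∏ j ∈ s.erase i, (v i - v j)⁻¹| ≤ (2*Real.exp 1)^m := by
    intro i hi
    have hi' : i ≤ m := by
      rw [hs] at hi; simp only [Finset.mem_range] at hi; omega
    have hd := nik_denom m i hm hi'
    have hpos : (0:ℝ) < ∏ j ∈ s.erase i, |v i - v j| := by
      apply Finset.prod_pos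
      intro j hj
      have hji : j ≠ i := (Finset.mem_erase.mp hj).1
      have hj' : j ∈ s := (Finset.mem_erase.mp hj).2
      rw [abs_pos, sub_ne_zero]
      exact fun hvij => hji (hinj hi hj' hvij).symm
    rw [Finset.abs_prod]
    have heq : ∏ j ∈ s.erase i, |(v i - v j)⁻¹| = (∏ j ∈ s.erase i, |v i - v j|)⁻¹ := by
      rw [← Finset.prod_inv_distrib]
      exact Finset.prod_congr rfl (fun j _ => abs_inv _)
    rw [heq, inv_le_comm₀ hpos (by positivity)]
    calc ((2*Real.exp 1)^m)⁻¹ = ((2*Real.exp 1)⁻¹)^m := by rw [inv_pow]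
      _ ≤ ∏ j ∈ s.erase i, |(i:ℝ)/m - (j:ℝ)/m| := hd
      _ = ∏ j ∈ s.erase i, |v i - v j| := rfl
  have hnodesmem : ∀ j ∈ s, 0 ≤ v j ∧ v j ≤ 1 := by
    intro j hj
    rw [hs] at hj; simp only [Finset.mem_range] at hj
    have hj' : (j:ℝ) ≤ m := by exact_mod_cast (by omega : j ≤ m)
    refine ⟨by positivity, ?_⟩
    rw [hv]
    rw [div_le_one hm0]
    exact hj'
  constructor
  · -- growth bound
    intro x
    conv_lhs => rw [hrep]
    rw [Lagrange.interpolate_apply, Polynomial.eval_finset_sum]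
    calc |∑ i ∈ s, Polynomial.eval x (Polynomial.C (p.eval (v i)) * Lagrange.basis s v i)|
        ≤ ∑ i ∈ s, |Polynomial.eval x (Polynomial.C (p.eval (v i)) * Lagrange.basis s v i)| :=
          Finset.abs_sum_le_sum_abs _ _
      _ ≤ ∑ _i ∈ s, M * ((2*Real.exp 1)^m * (1+|x|)^m) := by
          apply Finset.sum_le_sum
          intro i hi
          rw [Polynomial.eval_mul, Polynomial.eval_C, abs_mul]
          have hi' : i ≤ m := by
            rw [hs] at hi; simp only [Finset.mem_range] at hi; omega
          have hpe : |p.eval (v i)| ≤ M := hM i hi'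
          have h2 : |Polynomial.eval x (∏ j ∈ s.erase i,
              (Polynomial.X - Polynomial.C (v j)))| ≤ (1+|x|)^m := by
            rw [← hcard i hi]
            apply nik_prod_eval_bound
            intro j hj
            have h3 := hnodesmem j (Finset.mem_erase.mp hj).2
            have h4 : |x - v j| ≤ |x| + |v j| := abs_sub _ _
            have h5 : |v j| ≤ 1 := by
              rw [abs_of_nonneg h3.1]; exact h3.2
            linarith
          have hbe : |Polynomial.eval x (Lagrange.basis s v i)| ≤
              (2*Real.exp 1)^m * (1+|x|)^m := by
            rw [nik_basis_decomp, Polynomial.eval_mul, Polynomial.eval_C, abs_mul]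
            exact mul_le_mul (hcinv i hi) h2 (abs_nonneg _) (by positivity)
          exact mul_le_mul hpe hbe (abs_nonneg _) hM0
      _ = (m+1) * (2*Real.exp 1)^m * (1+|x|)^m * M := by
          rw [Finset.sum_const, hs, Finset.card_range, nsmul_eq_mul]
          push_cast
          ring
  · -- derivative bound
    intro x hx
    conv_lhs => rw [hrep]
    rw [Lagrange.interpolate_apply, Polynomial.derivative_sum, Polynomial.eval_finset_sum]
    calc |∑ i ∈ s, Polynomial.eval x (Polynomial.derivative
            (Polynomial.C (p.eval (v i)) * Lagrange.basis s v i))|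
        ≤ ∑ i ∈ s, |Polynomial.eval x (Polynomial.derivative
            (Polynomial.C (p.eval (v i)) * Lagrange.basis s v i))| :=
          Finset.abs_sum_le_sum_abs _ _
      _ ≤ ∑ _i ∈ s, M * ((2*Real.exp 1)^m * ((m:ℝ) * 2^m)) := by
          apply Finset.sum_le_sum
          intro i hi
          have hi' : i ≤ m := by
            rw [hs] at hi; simp only [Finset.mem_range] at hi; omega
          rw [Polynomial.derivative_C_mul, Polynomial.eval_mul, Polynomial.eval_C, abs_mul]
          have hpe : |p.eval (v i)| ≤ M := hM i hi'
          have hnodes2 : ∀ j ∈ s.erase i, |x - v j| ≤ 2 := by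
            intro j hj
            have h3 := hnodesmem j (Finset.mem_erase.mp hj).2
            have h4 : |x - v j| ≤ |x| + |v j| := abs_sub _ _
            have h5 : |v j| ≤ 1 := by
              rw [abs_of_nonneg h3.1]; exact h3.2
            linarith
          have h2' := nik_deriv_prod_eval_bound (s.erase i) v x 2 (by norm_num) hnodes2
          rw [hcard i hi] at h2'
          have hbe : |Polynomial.eval x (Polynomial.derivative (Lagrange.basis s v i))| ≤
              (2*Real.exp 1)^m * ((m:ℝ) * 2^m) := by
            rw [nik_basis_decomp, Polynomial.derivative_C_mul, Polynomial.eval_mul,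
              Polynomial.eval_C, abs_mul]
            exact mul_le_mul (hcinv i hi) h2' (abs_nonneg _) (by positivity)
          exact mul_le_mul hpe hbe (abs_nonneg _) hM0
      _ = (m+1) * m * (4*Real.exp 1)^m * M := by
          rw [Finset.sum_const, hs, Finset.card_range, nsmul_eq_mul]
          have h6 : ((2:ℝ)*Real.exp 1) * 2 = 4 * Real.exp 1 := by ring
          have h5 : ((2:ℝ)*Real.exp 1)^m * (2:ℝ)^m = (4*Real.exp 1)^m := by
            rw [← mul_pow, h6]
          push_cast
          rw [← h5]
          ring

/-- Scaled core lemma, on `[-R, R]` (values controlled on `[0, R]`). -/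
lemma nik_scaled (m : ℕ) (hm : 1 ≤ m) (φ : Polynomial ℝ) (hdeg : φ.natDegree ≤ m)
    (R : ℝ) (hR : 1 ≤ R) (M : ℝ)
    (hM : ∀ x : ℝ, 0 ≤ x → x ≤ R → |φ.eval x| ≤ M) :
    (∀ x : ℝ, |φ.eval x| ≤ ((m:ℝ)+1)^2 * (4*Real.exp 1)^m * (1+|x|/R)^m * M) ∧
    (∀ x : ℝ, |x| ≤ R →
      |(Polynomial.derivative φ).eval x| ≤ ((m:ℝ)+1)^2 * (4*Real.exp 1)^m * M / R) := by
  have hR0 : (0:ℝ) < R := lt_of_lt_of_le one_pos hR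
  set ψ : Polynomial ℝ := φ.comp (Polynomial.C R * Polynomial.X) with hψ
  have hψdeg : ψ.natDegree ≤ m := by
    rw [hψ]
    calc (φ.comp (Polynomial.C R * Polynomial.X)).natDegree
        ≤ φ.natDegree * (Polynomial.C R * Polynomial.X).natDegree :=
          Polynomial.natDegree_comp_le
      _ ≤ m * 1 := by
          apply Nat.mul_le_mul hdeg
          calc (Polynomial.C R * Polynomial.X).natDegree
              ≤ (Polynomial.C R).natDegree + Polynomial.X.natDegree :=
              Polynomial.natDegree_mul_le
            _ = 1 := by simp
      _ = m := by omega
  have hψeval : ∀ y : ℝ, ψ.eval y = φ.eval (R * y) := by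
    intro y
    rw [hψ, Polynomial.eval_comp]
    simp
  have hψM : ∀ i : ℕ, i ≤ m → |ψ.eval ((i:ℝ)/m)| ≤ M := by
    intro i hi
    rw [hψeval]
    have hm0 : (0:ℝ) < m := by exact_mod_cast hm
    have hi' : (i:ℝ) ≤ m := by exact_mod_cast hi
    apply hM
    · positivity
    · calc R * ((i:ℝ)/m) ≤ R * 1 := by
            apply mul_le_mul_of_nonneg_left _ hR0.le
            rw [div_le_one hm0]
            exact hi'
        _ = R := mul_one R
  obtain ⟨hA, hB⟩ := nik_core m hm ψ hψdeg M hψM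
  have hM0 : 0 ≤ M := le_trans (abs_nonneg _) (hM 0 le_rfl hR0.le)
  constructor
  · intro x
    have h1 : φ.eval x = ψ.eval (x / R) := by
      rw [hψeval, mul_div_cancel₀ _ hR0.ne']
    rw [h1]
    calc |ψ.eval (x/R)| ≤ ((m:ℝ)+1) * (2*Real.exp 1)^m * (1+|x/R|)^m * M := hA (x/R)
      _ ≤ ((m:ℝ)+1)^2 * (4*Real.exp 1)^m * (1+|x|/R)^m * M := by
          rw [abs_div, abs_of_pos hR0]
          have e1 : ((m:ℝ)+1) ≤ ((m:ℝ)+1)^2 := by nlinarith [Nat.cast_nonneg (α := ℝ) m]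
          have e2 : ((2:ℝ)*Real.exp 1)^m ≤ (4*Real.exp 1)^m := by
            apply pow_le_pow_left₀ (by positivity)
            nlinarith [Real.exp_pos 1]
          have e3 : (0:ℝ) ≤ (1+|x|/R)^m := by positivity
          have e4 : (0:ℝ) < ((m:ℝ)+1) := by positivity
          apply mul_le_mul_of_nonneg_right _ hM0
          apply mul_le_mul _ le_rfl e3 (by positivity)
          apply mul_le_mul e1 e2 (by positivity) (by positivity)
  · intro x hx
    have hder : (Polynomial.derivative φ).eval x =
        (Polynomial.derivative ψ).eval (x/R) / R := by
      rw [hψ, Polynomial.derivative_comp]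
      rw [Polynomial.eval_mul, Polynomial.eval_comp]
      have : Polynomial.derivative (Polynomial.C R * Polynomial.X) = Polynomial.C R := by
        simp
      rw [this]
      simp only [Polynomial.eval_mul, Polynomial.eval_C, Polynomial.eval_X]
      rw [mul_comm R (x/R), div_mul_cancel₀ _ hR0.ne']
      field_simp
    rw [hder, abs_div, abs_of_pos hR0]
    gcongr
    have hxr : |x/R| ≤ 1 := by
      rw [abs_div, abs_of_pos hR0, div_le_one hR0]
      exact hx
    refine (hB (x/R) hxr).trans ?_
    have h7 : (0:ℝ) ≤ (4*Real.exp 1)^m := by positivity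
    have h8 : (0:ℝ) ≤ (m:ℝ) := Nat.cast_nonneg m
    have h9 : ((m:ℝ)+1) * (m:ℝ) ≤ ((m:ℝ)+1)^2 := by nlinarith
    have h10 : (0:ℝ) ≤ (4*Real.exp 1)^m * M := mul_nonneg h7 hM0
    calc ((m:ℝ)+1) * (m:ℝ) * (4*Real.exp 1)^m * M
        = ((m:ℝ)+1) * (m:ℝ) * ((4*Real.exp 1)^m * M) := by ring
      _ ≤ ((m:ℝ)+1)^2 * ((4*Real.exp 1)^m * M) := mul_le_mul_of_nonneg_right h9 h10
      _ = ((m:ℝ)+1)^2 * (4*Real.exp 1)^m * M := by ring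

lemma nik_integrable_exp_neg_abs : Integrable (fun x : ℝ => Real.exp (-|x|)) := by
  rw [← integrableOn_univ, ← Set.Iic_union_Ioi (a := (0:ℝ))]
  apply IntegrableOn.union
  · apply (integrableOn_exp_Iic 0).congr_fun _ measurableSet_Iic
    intro x hx
    simp only [Set.mem_Iic] at hx
    simp [abs_of_nonpos hx]
  · apply ((exp_neg_integrableOn_Ioi 0 one_pos).congr_fun _ measurableSet_Ioi)
    intro x hx
    simp only [Set.mem_Ioi] at hx
    simp [abs_of_pos hx]

lemma nik_integral_exp_neg_abs : ∫ x : ℝ, Real.exp (-|x|) = 2 := by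
  have h := MeasureTheory.integral_add_compl (measurableSet_Iic (a := (0:ℝ)))
    nik_integrable_exp_neg_abs
  rw [Set.compl_Iic] at h
  rw [← h]
  have h1 : ∫ x in Set.Iic (0:ℝ), Real.exp (-|x|) = 1 := by
    rw [MeasureTheory.setIntegral_congr_fun measurableSet_Iic
      (g := fun x : ℝ => Real.exp x)
      (fun x hx => by simp [abs_of_nonpos (Set.mem_Iic.mp hx)])]
    rw [integral_exp_Iic]
    exact Real.exp_zero
  have h2 : ∫ x in Set.Ioi (0:ℝ), Real.exp (-|x|) = 1 := by
    rw [MeasureTheory.setIntegral_congr_fun measurableSet_Ioi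
      (g := fun x : ℝ => Real.exp (-x))
      (fun x hx => by simp [abs_of_pos (Set.mem_Ioi.mp hx)])]
    rw [integral_exp_neg_Ioi]
    simp
  rw [h1, h2]
  norm_num

lemma nik_eLpNorm_exp_neg_abs (q : ℝ≥0∞) (hq1 : 1 ≤ q) (hqt : q ≠ ∞) :
    eLpNorm (fun x : ℝ => Real.exp (-|x|)) q volume ≤ 2 := by
  have hq0 : q ≠ 0 := by
    intro h
    rw [h] at hq1
    exact (not_le.mpr zero_lt_one) (by exact_mod_cast hq1)
  have hqr1 : 1 ≤ q.toReal := by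
    have := ENNReal.toReal_mono hqt hq1
    simpa using this
  have hqr0 : 0 < q.toReal := lt_of_lt_of_le one_pos hqr1
  rw [MeasureTheory.eLpNorm_eq_lintegral_rpow_enorm_toReal hq0 hqt]
  have hpt : ∀ x : ℝ, (‖Real.exp (-|x|)‖₊ : ℝ≥0∞) ^ q.toReal
      ≤ ENNReal.ofReal (Real.exp (-|x|)) := by
    intro x
    have hpos : (0:ℝ) < Real.exp (-|x|) := Real.exp_pos _
    calc (‖Real.exp (-|x|)‖₊ : ℝ≥0∞) ^ q.toReal
        = ENNReal.ofReal (Real.exp (-|x|) ^ q.toReal) := by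
          rw [← enorm_eq_nnnorm, Real.enorm_eq_ofReal hpos.le, ← ENNReal.ofReal_rpow_of_pos hpos]
      _ ≤ ENNReal.ofReal (Real.exp (-|x|)) := by
          apply ENNReal.ofReal_le_ofReal
          rw [← Real.exp_mul]
          apply Real.exp_le_exp.mpr
          have h3 : |x| * 1 ≤ |x| * q.toReal :=
            mul_le_mul_of_nonneg_left hqr1 (abs_nonneg x)
          nlinarith
  have hlin : (∫⁻ x : ℝ, (‖Real.exp (-|x|)‖₊ : ℝ≥0∞) ^ q.toReal) ≤ ENNReal.ofReal 2 := by
    calc (∫⁻ x : ℝ, (‖Real.exp (-|x|)‖₊ : ℝ≥0∞) ^ q.toReal)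
        ≤ ∫⁻ x : ℝ, ENNReal.ofReal (Real.exp (-|x|)) := lintegral_mono hpt
      _ = ENNReal.ofReal (∫ x : ℝ, Real.exp (-|x|)) :=
          (MeasureTheory.ofReal_integral_eq_lintegral_ofReal nik_integrable_exp_neg_abs
            (ae_of_all _ fun x => (Real.exp_pos _).le)).symm
      _ = ENNReal.ofReal 2 := by rw [nik_integral_exp_neg_abs]
  calc (∫⁻ x : ℝ, (‖Real.exp (-|x|)‖₊ : ℝ≥0∞) ^ q.toReal) ^ (1 / q.toReal)
      ≤ (ENNReal.ofReal 2) ^ (1 / q.toReal) :=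
        ENNReal.rpow_le_rpow hlin (by positivity)
    _ ≤ 2 := by
        rw [show ENNReal.ofReal 2 = (2:ℝ≥0∞) by norm_num]
        calc (2:ℝ≥0∞) ^ (1 / q.toReal) ≤ (2:ℝ≥0∞) ^ (1:ℝ) :=
              ENNReal.rpow_le_rpow_of_exponent_le (by norm_num)
                (by rw [div_le_one hqr0]; exact hqr1)
          _ = 2 := ENNReal.rpow_one 2

/-- Choice of the threshold `D` for the tail estimate. -/
lemma nik_exponent (lam a : ℝ) (hlam : 1 < lam) (ha : 0 < a) :
    ∃ D : ℝ, 1 ≤ D ∧ ∀ u : ℝ, D ≤ u →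
      Real.log (512 * Real.exp 1 ^ 2 * u) + a - a * u ^ lam ≤ -(2*u) := by
  have he1 : (2:ℝ) ≤ Real.exp 1 := by
    have := Real.add_one_le_exp 1
    linarith
  set L : ℝ := Real.log (512 * Real.exp 1 ^ 2) + a with hL
  have hL0 : 0 < L := by
    have h1 : (1:ℝ) < 512 * Real.exp 1 ^ 2 := by nlinarith
    have := Real.log_pos h1
    positivity
  refine ⟨max 1 (((L+3)/a) ^ (1/(lam-1))), le_max_left _ _, ?_⟩
  intro u hu
  have hu1 : (1:ℝ) ≤ u := le_trans (le_max_left _ _) hu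
  have hu0 : (0:ℝ) < u := by linarith
  have hlog : Real.log (512 * Real.exp 1 ^ 2 * u)
      = Real.log (512 * Real.exp 1 ^ 2) + Real.log u := by
    rw [Real.log_mul (by positivity) hu0.ne']
  have hlogu : Real.log u ≤ u := by
    have := Real.log_le_sub_one_of_pos hu0
    linarith
  have hkey : (L + 3) * u ≤ a * u ^ lam := by
    have h1 : ((L+3)/a) ^ (1/(lam-1)) ≤ u := le_trans (le_max_right _ _) hu
    have h2 : (((L+3)/a) ^ (1/(lam-1))) ^ (lam - 1) ≤ u ^ (lam - 1) :=
      Real.rpow_le_rpow (by positivity) h1 (by linarith)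
    rw [← Real.rpow_mul (by positivity : (0:ℝ) ≤ (L+3)/a), one_div,
      inv_mul_cancel₀ (by intro h; apply absurd hlam; linarith [sub_eq_zero.mp h] : lam - 1 ≠ 0),
      Real.rpow_one] at h2
    have hsplit : u ^ lam = u * u ^ (lam - 1) := by
      have h6 : u ^ lam = u ^ (1 + (lam - 1)) := by congr 1; ring
      rw [h6, Real.rpow_add hu0, Real.rpow_one]
    have h4 : a * u * ((L+3)/a) ≤ a * u * u ^ (lam-1) :=
      mul_le_mul_of_nonneg_left h2 (by positivity)
    have h5 : a * u * ((L+3)/a) = (L+3) * u := by field_simp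
    rw [hsplit]
    calc (L+3) * u = a * u * ((L+3)/a) := h5.symm
      _ ≤ a * u * u ^ (lam-1) := h4
      _ = a * (u * u ^ (lam-1)) := by ring
  have h3 : L * 1 ≤ L * u := mul_le_mul_of_nonneg_left hu1 hL0.le
  rw [hlog]
  simp only [hL] at hkey h3
  nlinarith [hkey]

end NikAux

set_option maxHeartbeats 2000000 in
open Set Polynomial in
/-- Nikolskii-type inequality for `q < p`. -/
theorem stmt2 (lam a b : ℝ) (hlam : 1 < lam) (ha : 0 < a) (p q : ℝ≥0∞)
    (hq : 1 ≤ q) (hqp : q < p) :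
    ∃ C : ℝ, 0 < C ∧ ∀ m : ℕ, 1 ≤ m → ∀ φ : Polynomial ℝ, φ.natDegree ≤ m →
      wnorm volume q (fw lam a b) (fun x => φ.eval x) ≤
        ENNReal.ofReal (C * (m : ℝ) ^ ((1 / lam) * (1 / q.toReal - 1 / p.toReal))) *
          wnorm volume p (fw lam a b) (fun x => φ.eval x) := by
  obtain ⟨D, hD1, hDkey⟩ := nik_exponent lam a hlam ha
  set e1 := Real.exp 1 with he1def
  have he12 : (2:ℝ) ≤ e1 := by
    have := Real.add_one_le_exp 1
    rw [he1def]; linarith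
  have he10 : (0:ℝ) < e1 := by linarith
  refine ⟨2*D + 8, by linarith, ?_⟩
  intro m hm φ hdeg
  -- exponent bookkeeping
  have hqT : q ≠ ∞ := (hqp.trans_le le_top).ne
  have hq0 : q ≠ 0 := by
    intro h; rw [h] at hq; exact (not_le.mpr zero_lt_one) (by exact_mod_cast hq)
  have hp1 : 1 ≤ p := hq.trans hqp.le
  have hp0 : p ≠ 0 := by
    intro h; rw [h] at hp1; exact (not_le.mpr zero_lt_one) (by exact_mod_cast hp1)
  have hqr1 : 1 ≤ q.toReal := by
    have := ENNReal.toReal_mono hqT hq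
    simpa using this
  have hqr0 : 0 < q.toReal := lt_of_lt_of_le one_pos hqr1
  have hprinv0 : 0 ≤ 1 / p.toReal := by positivity
  have hprinv1 : 1 / p.toReal ≤ 1 := by
    by_cases hpT : p = ∞
    · simp [hpT]
    · have h1 : 1 ≤ p.toReal := by
        have := ENNReal.toReal_mono hpT hp1
        simpa using this
      rw [div_le_one (by linarith)]; linarith
  have hepos : 0 < 1 / q.toReal - 1 / p.toReal := by
    by_cases hpT : p = ∞
    · simp [hpT]; positivity
    · have h1 : q.toReal < p.toReal := by
        have := (ENNReal.toReal_lt_toReal hqT hpT).mpr hqp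
        exact this
      have h2 : 1 / p.toReal < 1 / q.toReal := by
        apply one_div_lt_one_div_of_lt hqr0 h1
      linarith
  have hele1 : 1 / q.toReal - 1 / p.toReal ≤ 1 := by
    have : 1 / q.toReal ≤ 1 := by rw [div_le_one hqr0]; exact hqr1
    linarith
  set ee := 1 / q.toReal - 1 / p.toReal with hee
  set θ := (1 / lam) * ee with hθ
  have hlam0 : (0:ℝ) < lam := by linarith
  have hθ0 : 0 ≤ θ := by positivity
  have hm1 : (1:ℝ) ≤ (m:ℝ) := by exact_mod_cast hm
  have hmθ1 : (1:ℝ) ≤ (m:ℝ) ^ θ := by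
    have h := Real.rpow_le_rpow_of_exponent_le hm1 hθ0
    rwa [Real.rpow_zero] at h
  -- trivial case φ = 0
  by_cases hφ0 : φ = 0
  · subst hφ0
    simp only [Polynomial.eval_zero, wnorm]
    simp
  -- continuity
  have hφcont : Continuous fun x : ℝ => φ.eval x := φ.continuous
  have hwcont : Continuous (fw lam a b) := by
    unfold fw
    apply Real.continuous_exp.comp
    apply Continuous.add _ continuous_const
    exact continuous_const.mul (continuous_abs.rpow_const fun x => Or.inr hlam0.le)
  set f := fun x : ℝ => φ.eval x * fw lam a b x with hf
  have hfcont : Continuous f := hφcont.mul hwcont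
  have hfm : AEStronglyMeasurable f volume := hfcont.aestronglyMeasurable
  have hwpos : ∀ x : ℝ, 0 < fw lam a b x := fun x => Real.exp_pos _
  -- scaling radius
  set R := (m:ℝ) ^ (1/lam) with hR
  have hR1 : (1:ℝ) ≤ R := by
    have h := Real.rpow_le_rpow_of_exponent_le hm1 (by positivity : (0:ℝ) ≤ 1/lam)
    rwa [Real.rpow_zero] at h
  have hR0 : (0:ℝ) < R := by linarith
  have hRm : R ≤ (m:ℝ) := by
    have h := Real.rpow_le_rpow_of_exponent_le hm1
      (by rw [div_le_one hlam0]; linarith : 1/lam ≤ 1)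
    rwa [Real.rpow_one] at h
  have hRlam : R ^ lam = (m:ℝ) := by
    rw [hR, ← Real.rpow_mul (Nat.cast_nonneg m), one_div,
      inv_mul_cancel₀ (by linarith : lam ≠ 0), Real.rpow_one]
  -- maximum on [-R, R]
  obtain ⟨x0, hx0mem, hx0max⟩ := isCompact_Icc.exists_isMaxOn
    (Set.nonempty_Icc.mpr (by linarith : -R ≤ R))
    ((continuous_abs.comp hφcont).continuousOn)
  set M := |φ.eval x0| with hM
  have hMub : ∀ x ∈ Set.Icc (-R) R, |φ.eval x| ≤ M := fun x hx => hx0max hx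
  have hM0 : 0 < M := by
    rcases lt_or_ge 0 M with h | h
    · exact h
    · exfalso
      apply hφ0
      apply Polynomial.eq_zero_of_infinite_isRoot
      apply Set.Infinite.mono _ (Set.Icc_infinite (by linarith : -R < R))
      intro x hx
      have := hMub x hx
      have : |φ.eval x| = 0 := le_antisymm (by linarith) (abs_nonneg _)
      simpa [Polynomial.IsRoot] using abs_eq_zero.mp this
  set Km := ((m:ℝ)+1)^2 * (4*e1)^m with hKm
  have hKm1 : (1:ℝ) ≤ Km := by
    have h1 : (1:ℝ) ≤ ((m:ℝ)+1)^2 := by nlinarith [Nat.cast_nonneg (α := ℝ) m]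
    have h2 : (1:ℝ) ≤ (4*e1)^m := one_le_pow₀ (by linarith)
    nlinarith
  have hKm0 : (0:ℝ) < Km := by linarith
  obtain ⟨hA', hB'⟩ := nik_scaled m hm φ hdeg R hR1 M
    (fun x hx0 hxR => hMub x ⟨by linarith, hxR⟩)
  rw [← hKm] at hA' hB'
  -- small interval where |φ| ≥ M/2
  set δ := min (R/(2*Km)) 1 with hδ
  have hδ0 : 0 < δ := lt_min (by positivity) one_pos
  have hδ1 : δ ≤ 1 := min_le_right _ _
  have hδlb : 1/(2*Km) ≤ δ := by
    apply le_min
    · gcongr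
    · rw [div_le_one (by linarith)]; linarith
  have hδub : δ ≤ R/(2*Km) := min_le_left _ _
  have hMVT : ∀ x ∈ Set.Icc (-R) R, ∀ y ∈ Set.Icc (-R) R,
      |φ.eval y - φ.eval x| ≤ (Km * M / R) * |y - x| := by
    intro x hx y hy
    have h := Convex.norm_image_sub_le_of_norm_deriv_le
      (f := fun t : ℝ => φ.eval t) (s := Set.Icc (-R) R) (C := Km * M / R)
      (fun t _ => φ.differentiableAt)
      (fun t ht => by
        rw [Polynomial.deriv, Real.norm_eq_abs]
        exact hB' t (abs_le.mpr ⟨ht.1, ht.2⟩))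
      (convex_Icc _ _) hx hy
    rwa [Real.norm_eq_abs, Real.norm_eq_abs] at h
  obtain ⟨α, hx0I, hIsub⟩ : ∃ α : ℝ, x0 ∈ Set.Icc α (α+δ) ∧
      Set.Icc α (α+δ) ⊆ Set.Icc (-R) R := by
    rcases le_or_gt x0 0 with hx0s | hx0s
    · refine ⟨x0, ⟨le_rfl, by linarith⟩, fun y hy => ⟨?_, ?_⟩⟩
      · have := hx0mem.1; simp only [Set.mem_Icc] at hy ⊢; linarith [hy.1]
      · simp only [Set.mem_Icc] at hy ⊢; linarith [hy.2]
    · refine ⟨x0 - δ, ⟨by linarith, by linarith⟩, fun y hy => ⟨?_, ?_⟩⟩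
      · simp only [Set.mem_Icc] at hy ⊢; linarith [hy.1]
      · have := hx0mem.2; simp only [Set.mem_Icc] at hy ⊢; linarith [hy.2]
  set I := Set.Icc α (α+δ) with hI
  have hIlow : ∀ y ∈ I, M/2 ≤ |φ.eval y| := by
    intro y hy
    have h1 := hMVT x0 hx0mem y (hIsub hy)
    have h2 : |y - x0| ≤ δ := by
      simp only [hI, Set.mem_Icc] at hy hx0I
      rw [abs_le]
      constructor <;> linarith [hy.1, hy.2, hx0I.1, hx0I.2]
    have h3 : (Km * M / R) * |y - x0| ≤ (Km * M / R) * (R/(2*Km)) :=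
      mul_le_mul_of_nonneg_left (h2.trans hδub) (by positivity)
    have h4 : (Km * M / R) * (R/(2*Km)) = M/2 := by field_simp
    have h5 : |φ.eval x0| - |φ.eval y| ≤ |φ.eval y - φ.eval x0| := by
      rw [abs_sub_comm]; exact abs_sub_abs_le_abs_sub _ _
    rw [← hM] at *
    linarith [h1, h5]
  -- lower bound for the p-norm
  have hflow : ∀ y ∈ I, M/2 * Real.exp (-(a*m) + b) ≤ |f y| := by
    intro y hy
    have hyR : |y| ≤ R := by
      have := hIsub hy; simp only [Set.mem_Icc] at this; rw [abs_le]; exact this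
    have h1 : |y| ^ lam ≤ (m:ℝ) := by
      rw [← hRlam]
      exact Real.rpow_le_rpow (abs_nonneg y) hyR hlam0.le
    have h2 : Real.exp (-(a*m) + b) ≤ fw lam a b y := by
      unfold fw
      apply Real.exp_le_exp.mpr
      have h2a := mul_le_mul_of_nonneg_left h1 ha.le
      linarith
    have h3 : |f y| = |φ.eval y| * fw lam a b y := by
      rw [hf, abs_mul, abs_of_pos (hwpos y)]
    rw [h3]
    exact mul_le_mul (hIlow y hy) h2 (Real.exp_pos _).le (abs_nonneg _)
  have hwnormP : wnorm volume p (fw lam a b) (fun x => φ.eval x) = eLpNorm f p volume := rfl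
  have hwnormQ : wnorm volume q (fw lam a b) (fun x => φ.eval x) = eLpNorm f q volume := rfl
  have hkey1 : ENNReal.ofReal (M/2 * Real.exp (-(a*m)+b) * δ) ≤
      wnorm volume p (fw lam a b) (fun x => φ.eval x) := by
    rw [hwnormP]
    have hIμ : volume I = ENNReal.ofReal δ := by
      rw [hI, Real.volume_Icc]; congr 1; ring
    have hμ0 : volume.restrict I ≠ 0 := by
      rw [Ne, Measure.restrict_eq_zero, hIμ]
      simp [hδ0, ENNReal.ofReal_eq_zero, not_le]
    have h0 : eLpNorm (fun _ : ℝ => M/2 * Real.exp (-(a*m)+b)) p (volume.restrict I) ≤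
        eLpNorm f p (volume.restrict I) := by
      apply eLpNorm_mono_ae
      apply ae_restrict_of_forall_mem measurableSet_Icc
      intro y hy
      rw [Real.norm_eq_abs, Real.norm_eq_abs,
        abs_of_pos (by positivity : (0:ℝ) < M/2 * Real.exp (-(a*m)+b))]
      exact hflow y hy
    have hconst : eLpNorm (fun _ : ℝ => M/2 * Real.exp (-(a*m)+b)) p (volume.restrict I)
        = (‖M/2 * Real.exp (-(a*m)+b)‖₊ : ℝ≥0∞) * (ENNReal.ofReal δ) ^ (1/p.toReal) := by
      rw [eLpNorm_const _ hp0 hμ0, Measure.restrict_apply_univ, hIμ, enorm_eq_nnnorm]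
    have hstep : ENNReal.ofReal (M/2 * Real.exp (-(a*m)+b) * δ) ≤
        (‖M/2 * Real.exp (-(a*m)+b)‖₊ : ℝ≥0∞) * (ENNReal.ofReal δ) ^ (1/p.toReal) := by
      rw [← enorm_eq_nnnorm, Real.enorm_eq_ofReal (by positivity), ENNReal.ofReal_mul (by positivity)]
      apply mul_le_mul_right
      calc ENNReal.ofReal δ = (ENNReal.ofReal δ) ^ (1:ℝ) := (ENNReal.rpow_one _).symm
        _ ≤ (ENNReal.ofReal δ) ^ (1/p.toReal) :=
          ENNReal.rpow_le_rpow_of_exponent_ge (ENNReal.ofReal_le_one.mpr hδ1) hprinv1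
    calc ENNReal.ofReal (M/2 * Real.exp (-(a*m)+b) * δ)
        ≤ (‖M/2 * Real.exp (-(a*m)+b)‖₊ : ℝ≥0∞) * (ENNReal.ofReal δ) ^ (1/p.toReal) := hstep
      _ = eLpNorm (fun _ : ℝ => M/2 * Real.exp (-(a*m)+b)) p (volume.restrict I) := hconst.symm
      _ ≤ eLpNorm f p (volume.restrict I) := h0
      _ ≤ eLpNorm f p volume := eLpNorm_mono_measure f Measure.restrict_le_self
  -- dispose of infinite p-norm
  by_cases htop : wnorm volume p (fw lam a b) (fun x => φ.eval x) = ∞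
  · rw [htop, ENNReal.mul_top]
    · exact le_top
    · rw [Ne, ENNReal.ofReal_eq_zero, not_le]
      positivity
  set Np := (wnorm volume p (fw lam a b) (fun x => φ.eval x)).toReal with hNp
  have hofNp : ENNReal.ofReal Np = wnorm volume p (fw lam a b) (fun x => φ.eval x) :=
    ENNReal.ofReal_toReal htop
  have hNp0 : 0 < Np := by
    apply ENNReal.toReal_pos _ htop
    intro h
    rw [h] at hkey1
    have h2 := le_antisymm hkey1 zero_le
    rw [ENNReal.ofReal_eq_zero] at h2
    have h3 := mul_pos (mul_pos (by linarith : (0:ℝ) < M/2) (Real.exp_pos (-(a*(m:ℝ))+b))) hδ0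
    linarith
  have hc0δNp : M/2 * Real.exp (-(a*m)+b) * δ ≤ Np := by
    rw [← hofNp] at hkey1
    exact (ENNReal.ofReal_le_ofReal_iff hNp0.le).mp hkey1
  have hMNp : M ≤ 4 * Km * Real.exp (a*m - b) * Np := by
    have hE : Real.exp (a*m - b) * Real.exp (-(a*m)+b) = 1 := by
      rw [← Real.exp_add]
      ring_nf
      exact Real.exp_zero
    have h2 : δ⁻¹ ≤ 2*Km := by
      rw [inv_le_comm₀ hδ0 (by linarith)]
      rw [inv_eq_one_div]
      exact hδlb
    have h4 : M/2 * Real.exp (-(a*m)+b) * δ * (2 * Real.exp (a*m-b) * δ⁻¹) = M := by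
      calc M/2 * Real.exp (-(a*m)+b) * δ * (2 * Real.exp (a*m-b) * δ⁻¹)
          = M * (Real.exp (a*m-b) * Real.exp (-(a*m)+b)) * (δ * δ⁻¹) := by ring
        _ = M := by rw [hE, mul_inv_cancel₀ hδ0.ne']; ring
    calc M = M/2 * Real.exp (-(a*m)+b) * δ * (2 * Real.exp (a*m-b) * δ⁻¹) := h4.symm
      _ ≤ Np * (2 * Real.exp (a*m-b) * δ⁻¹) :=
        mul_le_mul_of_nonneg_right hc0δNp (by positivity)
      _ ≤ Np * (2 * Real.exp (a*m-b) * (2*Km)) := by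
        apply mul_le_mul_of_nonneg_left _ hNp0.le
        apply mul_le_mul_of_nonneg_left h2 (by positivity)
      _ = 4 * Km * Real.exp (a*m - b) * Np := by ring
  -- tail pointwise bound
  set T := D * R with hT
  have hT0 : 0 < T := by
    rw [hT]; positivity
  have htail : ∀ x : ℝ, T ≤ |x| →
      |f x| ≤ 4 * Real.exp (-(m:ℝ)) * Np * Real.exp (-|x|) := by
    intro x hTx
    set u := |x| / R with hu
    have huD : D ≤ u := by
      rw [hu, le_div_iff₀ hR0]
      calc D * R = T := hT.symm
        _ ≤ |x| := hTx
    have hu1 : (1:ℝ) ≤ u := le_trans hD1 huD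
    have hu0 : (0:ℝ) < u := by linarith
    have hxRu : |x| = R * u := by rw [hu]; field_simp
    have h1 : |φ.eval x| ≤ Km * (2*u)^m * M := by
      have h2 := hA' x
      have h3 : (1 + |x|/R) ^ m ≤ (2*u)^m := by
        apply pow_le_pow_left₀ (by positivity)
        rw [← hu]
        linarith
      calc |φ.eval x| ≤ Km * (1+|x|/R)^m * M := h2
        _ ≤ Km * (2*u)^m * M := by
            apply mul_le_mul_of_nonneg_right _ hM0.le
            exact mul_le_mul_of_nonneg_left h3 hKm0.le
    have hxlam : |x| ^ lam = (m:ℝ) * u ^ lam := by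
      rw [hxRu, Real.mul_rpow hR0.le hu0.le, hRlam]
    have hfw : fw lam a b x = Real.exp (-a * ((m:ℝ) * u^lam) + b) := by
      unfold fw; rw [hxlam]
    have hm2 : (m:ℝ) + 1 ≤ 2^m := by
      have := Nat.lt_two_pow_self (n := m)
      exact_mod_cast Nat.succ_le_of_lt this
    have hKm16 : Km ≤ (16*e1)^m := by
      calc Km = ((m:ℝ)+1)^2 * (4*e1)^m := hKm
        _ ≤ ((2:ℝ)^m)^2 * (4*e1)^m := by
            apply mul_le_mul_of_nonneg_right _ (by positivity)
            apply pow_le_pow_left₀ (by positivity) hm2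
        _ = (16*e1)^m := by
            rw [pow_right_comm, ← mul_pow]
            congr 1
            ring
    have hKmsq : Km * Km ≤ (256*e1^2)^m := by
      calc Km * Km ≤ (16*e1)^m * (16*e1)^m :=
            mul_le_mul hKm16 hKm16 hKm0.le (by positivity)
        _ = (256*e1^2)^m := by
            rw [← mul_pow]
            congr 1
            ring
    have h512pos : (0:ℝ) < 512 * e1^2 * u := by positivity
    have hpowlog : (512*e1^2*u)^m = Real.exp ((m:ℝ) * Real.log (512*e1^2*u)) := by
      rw [Real.exp_nat_mul, Real.exp_log h512pos]
    have hcombo : Real.exp (a*m - b) * Real.exp (-a*((m:ℝ)*u^lam) + b)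
        = Real.exp ((m:ℝ)*(a - a*u^lam)) := by
      rw [← Real.exp_add]; congr 1; ring
    have hexpkey : Real.exp ((m:ℝ)*Real.log (512*e1^2*u)) * Real.exp ((m:ℝ)*(a - a*u^lam))
        = Real.exp ((m:ℝ) * (Real.log (512*e1^2*u) + a - a*u^lam)) := by
      rw [← Real.exp_add]; congr 1; ring
    have hexple : Real.exp ((m:ℝ)*(Real.log (512*e1^2*u) + a - a*u^lam))
        ≤ Real.exp ((m:ℝ)*(-(2*u))) :=
      Real.exp_le_exp.mpr (mul_le_mul_of_nonneg_left (hDkey u huD) (Nat.cast_nonneg m))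
    have hfinal : Real.exp ((m:ℝ)*(-(2*u))) ≤ Real.exp (-(m:ℝ)) * Real.exp (-|x|) := by
      rw [← Real.exp_add]
      apply Real.exp_le_exp.mpr
      have hmu1 : (m:ℝ) ≤ (m:ℝ)*u := le_mul_of_one_le_right (Nat.cast_nonneg m) hu1
      have hmu2 : |x| ≤ (m:ℝ)*u := by
        rw [hxRu]
        exact mul_le_mul_of_nonneg_right hRm hu0.le
      linarith
    have hfx : |f x| = |φ.eval x| * fw lam a b x := by
      rw [hf, abs_mul, abs_of_pos (hwpos x)]
    calc |f x| = |φ.eval x| * fw lam a b x := hfx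
      _ ≤ (Km * (2*u)^m * M) * Real.exp (-a*((m:ℝ)*u^lam)+b) := by
          rw [hfw]
          exact mul_le_mul_of_nonneg_right h1 (Real.exp_pos _).le
      _ ≤ (Km * (2*u)^m * (4*Km*Real.exp (a*m - b)*Np)) * Real.exp (-a*((m:ℝ)*u^lam)+b) := by
          apply mul_le_mul_of_nonneg_right _ (Real.exp_pos _).le
          apply mul_le_mul_of_nonneg_left hMNp (by positivity)
      _ = 4*Np * ((Km*Km) * (2*u)^m) *
            (Real.exp (a*m - b) * Real.exp (-a*((m:ℝ)*u^lam)+b)) := by ring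
      _ = 4*Np * ((Km*Km) * (2*u)^m) * Real.exp ((m:ℝ)*(a - a*u^lam)) := by rw [hcombo]
      _ ≤ 4*Np * ((256*e1^2)^m * (2*u)^m) * Real.exp ((m:ℝ)*(a - a*u^lam)) := by
          apply mul_le_mul_of_nonneg_right _ (Real.exp_pos _).le
          apply mul_le_mul_of_nonneg_left _ (by positivity)
          exact mul_le_mul_of_nonneg_right hKmsq (by positivity)
      _ = 4*Np * (512*e1^2*u)^m * Real.exp ((m:ℝ)*(a - a*u^lam)) := by
          rw [← mul_pow]
          congr 3
          ring
      _ = 4*Np * (Real.exp ((m:ℝ)*Real.log (512*e1^2*u)) * Real.exp ((m:ℝ)*(a - a*u^lam))) := by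
          rw [hpowlog]; ring
      _ = 4*Np * Real.exp ((m:ℝ)*(Real.log (512*e1^2*u) + a - a*u^lam)) := by rw [hexpkey]
      _ ≤ 4*Np * Real.exp ((m:ℝ)*(-(2*u))) :=
          mul_le_mul_of_nonneg_left hexple (by positivity)
      _ ≤ 4*Np * (Real.exp (-(m:ℝ)) * Real.exp (-|x|)) :=
          mul_le_mul_of_nonneg_left hfinal (by positivity)
      _ = 4 * Real.exp (-(m:ℝ)) * Np * Real.exp (-|x|) := by ring
  -- splitting
  set S := Set.Icc (-T) T with hS
  have hsplit : eLpNorm f q volume ≤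
      eLpNorm (S.indicator f) q volume + eLpNorm (Sᶜ.indicator f) q volume := by
    have hfeq : f = fun x => S.indicator f x + Sᶜ.indicator f x := by
      funext x
      by_cases hx : x ∈ S
      · simp [Set.indicator, hx]
      · simp [Set.indicator, hx]
    conv_lhs => rw [hfeq]
    exact eLpNorm_add_le (hfm.indicator measurableSet_Icc)
      (hfm.indicator measurableSet_Icc.compl) hq
  -- interior bound
  have hvolS : volume S = ENNReal.ofReal (2*T) := by
    rw [hS, Real.volume_Icc]; congr 1; ring
  have hint : eLpNorm (S.indicator f) q volume ≤
      ENNReal.ofReal (2*D * (m:ℝ)^θ) * wnorm volume p (fw lam a b) (fun x => φ.eval x) := by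
    rw [eLpNorm_indicator_eq_eLpNorm_restrict measurableSet_Icc]
    have h1 := eLpNorm_le_eLpNorm_mul_rpow_measure_univ hqp.le (hfm.restrict (s := S))
    rw [Measure.restrict_apply_univ, hvolS] at h1
    have h2 : (ENNReal.ofReal (2*T)) ^ ee ≤ ENNReal.ofReal (2*D*(m:ℝ)^θ) := by
      rw [ENNReal.ofReal_rpow_of_pos (by positivity)]
      apply ENNReal.ofReal_le_ofReal
      have h3 : (2*T) ^ ee = (2*D)^ee * R^ee := by
        rw [hT, ← Real.mul_rpow (by positivity) hR0.le]
        congr 1; ring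
      rw [h3]
      have h4 : (2*D)^ee ≤ 2*D := by
        calc (2*D)^ee ≤ (2*D)^(1:ℝ) := Real.rpow_le_rpow_of_exponent_le (by linarith) hele1
          _ = 2*D := Real.rpow_one _
      have h5 : R^ee = (m:ℝ)^θ := by
        rw [hR, ← Real.rpow_mul (Nat.cast_nonneg m), hθ]
      rw [h5]
      exact mul_le_mul_of_nonneg_right h4 (by positivity)
    calc eLpNorm f q (volume.restrict S)
        ≤ eLpNorm f p (volume.restrict S) * (ENNReal.ofReal (2*T)) ^ ee := h1
      _ ≤ eLpNorm f p volume * ENNReal.ofReal (2*D*(m:ℝ)^θ) :=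
          mul_le_mul' (eLpNorm_mono_measure f Measure.restrict_le_self) h2
      _ = ENNReal.ofReal (2*D*(m:ℝ)^θ) *
            wnorm volume p (fw lam a b) (fun x => φ.eval x) := by
          rw [hwnormP, mul_comm]
  -- tail bound
  have htailn : eLpNorm (Sᶜ.indicator f) q volume ≤
      ENNReal.ofReal 8 * wnorm volume p (fw lam a b) (fun x => φ.eval x) := by
    rw [eLpNorm_indicator_eq_eLpNorm_restrict measurableSet_Icc.compl]
    set g := fun x : ℝ => (4 * Real.exp (-(m:ℝ)) * Np) * Real.exp (-|x|) with hg
    have h1 : eLpNorm f q (volume.restrict Sᶜ) ≤ eLpNorm g q (volume.restrict Sᶜ) := by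
      apply eLpNorm_mono_ae
      apply ae_restrict_of_forall_mem measurableSet_Icc.compl
      intro x hx
      have hTx : T ≤ |x| := by
        simp only [hS, Set.mem_compl_iff, Set.mem_Icc, not_and_or, not_le] at hx
        rcases hx with h | h
        · exact le_abs.mpr (Or.inr (by linarith))
        · exact le_abs.mpr (Or.inl h.le)
      rw [Real.norm_eq_abs, Real.norm_eq_abs]
      have h3 : |g x| = 4 * Real.exp (-(m:ℝ)) * Np * Real.exp (-|x|) := by
        rw [hg]
        exact abs_of_pos (by positivity)
      rw [h3]
      exact htail x hTx
    have h2 : eLpNorm g q (volume.restrict Sᶜ) ≤ eLpNorm g q volume :=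
      eLpNorm_mono_measure g Measure.restrict_le_self
    have h3 : eLpNorm g q volume = (‖(4 * Real.exp (-(m:ℝ)) * Np : ℝ)‖₊ : ℝ≥0∞) *
        eLpNorm (fun x : ℝ => Real.exp (-|x|)) q volume := by
      have hgs : g = (4 * Real.exp (-(m:ℝ)) * Np : ℝ) • (fun x : ℝ => Real.exp (-|x|)) := rfl
      rw [hgs, eLpNorm_const_smul, enorm_eq_nnnorm]
    have h4 : eLpNorm (fun x : ℝ => Real.exp (-|x|)) q volume ≤ 2 :=
      nik_eLpNorm_exp_neg_abs q hq hqT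
    have hexpm1 : Real.exp (-(m:ℝ)) ≤ 1 := by
      have h5 := Real.exp_le_exp.mpr (show -(m:ℝ) ≤ 0 by linarith)
      rwa [Real.exp_zero] at h5
    calc eLpNorm f q (volume.restrict Sᶜ) ≤ eLpNorm g q volume := h1.trans h2
      _ = (‖(4 * Real.exp (-(m:ℝ)) * Np : ℝ)‖₊ : ℝ≥0∞) *
          eLpNorm (fun x : ℝ => Real.exp (-|x|)) q volume := h3
      _ ≤ ENNReal.ofReal (4 * Real.exp (-(m:ℝ)) * Np) * 2 := by
          rw [← enorm_eq_nnnorm, Real.enorm_eq_ofReal (by positivity)]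
          exact mul_le_mul_right h4 _
      _ = ENNReal.ofReal (8 * Real.exp (-(m:ℝ)) * Np) := by
          rw [show (2:ℝ≥0∞) = ENNReal.ofReal 2 by norm_num,
            ← ENNReal.ofReal_mul (by positivity)]
          congr 1
          ring
      _ ≤ ENNReal.ofReal (8 * Np) := by
          apply ENNReal.ofReal_le_ofReal
          calc 8 * Real.exp (-(m:ℝ)) * Np ≤ 8 * 1 * Np := by
                apply mul_le_mul_of_nonneg_right _ hNp0.le
                exact mul_le_mul_of_nonneg_left hexpm1 (by norm_num)
            _ = 8 * Np := by ring
      _ = ENNReal.ofReal 8 * ENNReal.ofReal Np := by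
          rw [← ENNReal.ofReal_mul (by norm_num)]
      _ = ENNReal.ofReal 8 * wnorm volume p (fw lam a b) (fun x => φ.eval x) := by
          rw [hofNp]
  -- combine
  calc wnorm volume q (fw lam a b) (fun x => φ.eval x) = eLpNorm f q volume := hwnormQ
    _ ≤ eLpNorm (S.indicator f) q volume + eLpNorm (Sᶜ.indicator f) q volume := hsplit
    _ ≤ ENNReal.ofReal (2*D * (m:ℝ)^θ) * wnorm volume p (fw lam a b) (fun x => φ.eval x)
          + ENNReal.ofReal 8 * wnorm volume p (fw lam a b) (fun x => φ.eval x) :=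
        add_le_add hint htailn
    _ = (ENNReal.ofReal (2*D * (m:ℝ)^θ) + ENNReal.ofReal 8) *
          wnorm volume p (fw lam a b) (fun x => φ.eval x) := (add_mul _ _ _).symm
    _ ≤ ENNReal.ofReal ((2*D+8) * (m:ℝ)^θ) *
          wnorm volume p (fw lam a b) (fun x => φ.eval x) := by
        apply mul_le_mul_left
        rw [← ENNReal.ofReal_add (by positivity) (by norm_num)]
        apply ENNReal.ofReal_le_ofReal
        have h8 : (8:ℝ) ≤ 8 * (m:ℝ)^θ := by linarith [hmθ1]
        have h9 : (2*D+8) * (m:ℝ)^θ = 2*D*(m:ℝ)^θ + 8*(m:ℝ)^θ := by ring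
        linarith [h8, h9]

end
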